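/- Let Λ > 0 and E > 0 be real numbers with E ≤ 2πΛ². Then the 2-dimensional Lebesgue measure of the region B₊ = { (p,q) ∈ [0,Λ] × [0,Λ] : 2π·p·q ≤ E } equals (E/2π)·2·log Λ − (E/2π)·(log(E/2π) − 1). -/

import Mathlib

open MeasureTheory

/-- **Phase-space area for the Hamiltonian `h(q,p) = 2πqp` with cutoff `Λ`.**
For `0 < Λ`, `0 < E ≤ 2πΛ²`, the Lebesgue area of
`B₊ = {(p,q) ∈ [0,Λ]² : 2πpq ≤ E}` equals
`(E/2π)·2·log Λ − (E/2π)·(log(E/2π) − 1)`. -/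
theorem phase_space_area (Λ E : ℝ) (hΛ : 0 < Λ) (hE : 0 < E)
    (hEΛ : E ≤ 2 * Real.pi * Λ ^ 2) :
    volume {x : ℝ × ℝ | x.1 ∈ Set.Icc 0 Λ ∧ x.2 ∈ Set.Icc 0 Λ ∧
        2 * Real.pi * x.1 * x.2 ≤ E} =
      ENNReal.ofReal (E / (2 * Real.pi) * (2 * Real.log Λ) -
        E / (2 * Real.pi) * (Real.log (E / (2 * Real.pi)) - 1)) := by
  have hπ : (0:ℝ) < 2 * Real.pi := by positivity
  set c := E / (2 * Real.pi) with hc_def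
  have hc : 0 < c := div_pos hE hπ
  have hcΛ2 : c ≤ Λ ^ 2 := by
    rw [hc_def, div_le_iff₀ hπ]; nlinarith
  have hd0 : 0 < c / Λ := div_pos hc hΛ
  have hd : c / Λ ≤ Λ := by
    rw [div_le_iff₀ hΛ]; nlinarith
  set S : Set (ℝ × ℝ) := {x : ℝ × ℝ | x.1 ∈ Set.Icc 0 Λ ∧ x.2 ∈ Set.Icc 0 Λ ∧
        2 * Real.pi * x.1 * x.2 ≤ E} with hS_def
  have hS : MeasurableSet S := by
    apply MeasurableSet.inter (measurableSet_Icc.preimage measurable_fst)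
    exact (measurableSet_Icc.preimage measurable_snd).inter
      (measurableSet_le ((measurable_const.mul measurable_fst).mul measurable_snd)
        measurable_const)
  rw [Measure.volume_eq_prod, Measure.prod_apply hS]
  -- a.e. identification of sliced volumes
  have hae : (fun p => volume (Prod.mk p ⁻¹' S)) =ᵐ[volume]
      (Set.Ioc 0 Λ).indicator (fun p => ENNReal.ofReal (min Λ (c / p))) := by
    have hsub : {p : ℝ | volume (Prod.mk p ⁻¹' S) ≠
        (Set.Ioc 0 Λ).indicator (fun p => ENNReal.ofReal (min Λ (c / p))) p} ⊆ {0} := by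
      intro p hp
      by_contra hp0
      have hp0' : p ≠ 0 := hp0
      apply hp
      by_cases hmem : p ∈ Set.Ioc 0 Λ
      · rw [Set.indicator_of_mem hmem]
        have hp1 : 0 < p := hmem.1
        have hslice : Prod.mk p ⁻¹' S = Set.Icc 0 (min Λ (c / p)) := by
          ext q
          simp only [hS_def, Set.mem_preimage, Set.mem_setOf_eq, Set.mem_Icc]
          rw [le_min_iff]
          constructor
          · rintro ⟨_, ⟨hq0, hqΛ⟩, hq⟩
            refine ⟨hq0, hqΛ, ?_⟩
            rw [le_div_iff₀ hp1, hc_def, le_div_iff₀ hπ]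
            nlinarith
          · rintro ⟨hq0, hq⟩
            have hqΛ : q ≤ Λ := hq.1
            refine ⟨⟨hp1.le, hmem.2⟩, ⟨hq0, hqΛ⟩, ?_⟩
            have : q ≤ c / p := hq.2
            rw [le_div_iff₀ hp1, hc_def, le_div_iff₀ hπ] at this
            nlinarith
        rw [hslice, Real.volume_Icc, sub_zero]
      · rw [Set.indicator_of_notMem hmem]
        have hslice : Prod.mk p ⁻¹' S = ∅ := by
          ext q
          simp only [hS_def, Set.mem_preimage, Set.mem_setOf_eq, Set.mem_Icc, Set.mem_empty_iff_false,
            iff_false]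
          rintro ⟨⟨hp1, hp2⟩, _, _⟩
          exact hmem ⟨lt_of_le_of_ne hp1 (Ne.symm hp0'), hp2⟩
        rw [hslice, measure_empty]
    exact measure_mono_null hsub (Real.volume_singleton)
  rw [lintegral_congr_ae hae, lintegral_indicator measurableSet_Ioc]
  -- split the domain at c/Λ
  have hsplit : Set.Ioc (0:ℝ) Λ = Set.Ioc 0 (c/Λ) ∪ Set.Ioc (c/Λ) Λ :=
    (Set.Ioc_union_Ioc_eq_Ioc hd0.le hd).symm
  have hdisj : Disjoint (Set.Ioc (0:ℝ) (c/Λ)) (Set.Ioc (c/Λ) Λ) :=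
    Set.Ioc_disjoint_Ioc_of_le le_rfl
  rw [hsplit, lintegral_union measurableSet_Ioc hdisj]
  -- first piece: function equals Λ
  have h1 : ∫⁻ p in Set.Ioc (0:ℝ) (c/Λ), ENNReal.ofReal (min Λ (c / p)) =
      ENNReal.ofReal c := by
    rw [setLIntegral_congr_fun_ae measurableSet_Ioc
      (ae_of_all _ (fun p hp => ?_)), setLIntegral_const, Real.volume_Ioc, sub_zero,
      ← ENNReal.ofReal_mul hΛ.le]
    · congr 1
      field_simp
    · have hp1 : 0 < p := hp.1
      have : Λ ≤ c / p := by
        rw [le_div_iff₀ hp1]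
        calc Λ * p ≤ Λ * (c/Λ) := by nlinarith [hp.2]
        _ = c := by field_simp
      rw [min_eq_left this]
  -- second piece
  have hcont : ContinuousOn (fun p : ℝ => c / p) (Set.Icc (c/Λ) Λ) := by
    apply ContinuousOn.div continuousOn_const continuousOn_id
    intro x hx
    exact ne_of_gt (lt_of_lt_of_le hd0 hx.1)
  have hint : IntegrableOn (fun p : ℝ => c / p) (Set.Ioc (c/Λ) Λ) :=
    (hcont.integrableOn_Icc).mono_set Set.Ioc_subset_Icc_self
  have h2 : ∫⁻ p in Set.Ioc (c/Λ) Λ, ENNReal.ofReal (min Λ (c / p)) =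
      ENNReal.ofReal (c * (2 * Real.log Λ - Real.log c)) := by
    rw [setLIntegral_congr_fun_ae measurableSet_Ioc
      (ae_of_all _ (fun p hp => ?_))]
    · rw [← ofReal_integral_eq_lintegral_ofReal hint
        ((ae_restrict_iff' measurableSet_Ioc).2 (ae_of_all _ fun p hp =>
          div_nonneg hc.le (lt_of_lt_of_le hd0 hp.1.le).le))]
      · congr 1
        rw [← intervalIntegral.integral_of_le hd]
        have h0 : (0:ℝ) ∉ Set.uIcc (c/Λ) Λ := by
          rw [Set.uIcc_of_le hd]
          intro h
          exact absurd h.1 (not_le.2 hd0)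
        calc ∫ p in (c/Λ)..Λ, c / p = ∫ p in (c/Λ)..Λ, c * (1 / p) := by
              simp [div_eq_mul_inv]
          _ = c * ∫ p in (c/Λ)..Λ, 1 / p := intervalIntegral.integral_const_mul _ _
          _ = c * Real.log (Λ / (c/Λ)) := by rw [integral_one_div h0]
          _ = c * (2 * Real.log Λ - Real.log c) := by
              rw [div_div_eq_mul_div, Real.log_div (by positivity) (ne_of_gt hc),
                Real.log_mul (ne_of_gt hΛ) (ne_of_gt hΛ)]
              ring
    · have hp1 : 0 < p := lt_of_lt_of_le hd0 hp.1.le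
      have : c / p ≤ Λ := by
        rw [div_le_iff₀ hp1]
        calc c = (c/Λ) * Λ := by field_simp
        _ ≤ Λ * p := by nlinarith [hp.1.le]
      rw [min_eq_right this]
  have hlog : Real.log c ≤ 2 * Real.log Λ := by
    have := Real.log_le_log hc hcΛ2
    rwa [Real.log_pow, Nat.cast_ofNat] at this
  rw [h1, h2, ← ENNReal.ofReal_add hc.le (mul_nonneg hc.le (by linarith))]
  congr 1
  ring
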